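/- Dynamic validated bound for the correcting term (Lemma 4): Let u be a real number with 0 < u, let n be a positive integer with 2(n+1)·u < 1, and let x, π_0, …, π_{n−1}, σ_0, …, σ_{n−1} be real numbers; set c = Σ_{i=0}^{n−1} (π_i + σ_i) x^i. Suppose: (1) w_i = (π_i + σ_i)·(1+μ_i) with |μ_i| ≤ u, ĉ_{n−1} = w_{n−1} and, for i = n−2, …, 0, ĉ_i = (ĉ_{i+1}·x·(1+φ_i) + w_i)·(1+ψ_i) with |φ_i|, |ψ_i| ≤ u, and ĉ = ĉ_0; (2) v_i = (|π_i| + |σ_i|)/(1+μ'_i) with |μ'_i| ≤ u, b_{n−1} = v_{n−1} and, for i = n−2, …, 0, b_i = ( b_{i+1}·|x|/(1+φ'_i) + v_i ) / (1+ψ'_i) with |φ'_i|, |ψ'_i| ≤ u, and b̂ = b_0; (3) ĝ = γ_{2n−1}/(1+ε_0), t = ĝ·b̂/(1+ε_1), and α̂ = ( t/(1 − 2(n+1)·u) ) / (1+ε_2), with |ε_0|, |ε_1|, |ε_2| ≤ u. Then |c − ĉ| ≤ α̂. -/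

import Mathlib

lemma horner_sum_succ (f : ℕ → ℝ) (x : ℝ) (t k : ℕ) :
    ∑ i ∈ Finset.range (t + 1), f (k + i) * x ^ i
      = (∑ i ∈ Finset.range t, f (k + 1 + i) * x ^ i) * x + f k := by
  rw [Finset.sum_range_succ', Finset.sum_mul]
  simp only [pow_zero, mul_one, Nat.add_zero]
  congr 1
  refine Finset.sum_congr rfl fun i _ => ?_
  rw [show k + (i + 1) = k + 1 + i by omega, pow_succ]
  ring

lemma pow_mul_one_sub_le (u : ℝ) (hu : 0 ≤ u) :
    ∀ m : ℕ, (m : ℝ) * u < 1 → (1 + u) ^ m * (1 - (m : ℝ) * u) ≤ 1 := by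
  intro m
  induction m with
  | zero => simp
  | succ m ih =>
    intro h
    push_cast at h ⊢
    have hm : (m : ℝ) * u < 1 := by nlinarith [Nat.cast_nonneg (α := ℝ) m]
    have hP : (0:ℝ) ≤ (1+u)^m := by positivity
    have h2 := ih (by exact_mod_cast hm)
    rw [pow_succ]
    nlinarith [mul_nonneg hP (mul_nonneg (mul_nonneg (by positivity : (0:ℝ) ≤ (m:ℝ)+1) hu) hu)]

lemma one_le_pow_one_add (u : ℝ) (hu : 0 ≤ u) : ∀ m : ℕ, (1:ℝ) ≤ (1+u)^m := by
  intro m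
  induction m with
  | zero => simp
  | succ m ih => rw [pow_succ]; nlinarith


lemma l_prod_nonneg (a b u : ℝ) (ha : -u ≤ a) (hb : -u ≤ b) (hu1 : u ≤ 1) :
    (0:ℝ) ≤ (1+a)*(1+b) := by nlinarith

lemma l_prod_le (a b u : ℝ) (ha' : -u ≤ a) (ha : a ≤ u) (hb' : -u ≤ b) (hb : b ≤ u)
    (hu : 0 ≤ u) : (1+a)*(1+b) ≤ (1+u)^2 := by nlinarith

lemma l_prod_err (a b u : ℝ) (ha' : -u ≤ a) (ha : a ≤ u) (hb' : -u ≤ b) (hb : b ≤ u)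
    (hu : 0 ≤ u) : |(1+a)*(1+b) - 1| ≤ 2*u + u^2 := by
  rw [abs_le]; constructor <;> nlinarith

lemma l_combine1 (A S q u E : ℝ) (hq : 0 ≤ q) (hE : 1 ≤ E) (hS : 0 ≤ S)
    (h : A ≤ S*(2*u+u^2) + (E-1)*S*(1+u)^2 + q*(2*u+u^2)) :
    A ≤ (E*(1+u)^2 - 1)*(S + q) := by
  nlinarith [mul_nonneg (mul_nonneg hq (by linarith : (0:ℝ) ≤ E-1)) (sq_nonneg (1+u))]

lemma l_combine2 (S1 q u E B y bk : ℝ) (hq : 0 ≤ q) (hE : 1 ≤ E) (hy : 0 ≤ y)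
    (h5 : B*y + q ≤ (1+u)^2 * bk) (hS : S1 ≤ E*B) :
    S1*y + q ≤ E*((1+u)^2*bk) := by
  have hE0 : (0:ℝ) ≤ E := by linarith
  nlinarith [mul_le_mul_of_nonneg_left h5 hE0, mul_le_mul_of_nonneg_right hS hy,
    mul_nonneg (sub_nonneg.mpr hE) hq]

set_option maxHeartbeats 1000000 in
/-- Dynamic validated bound for the correcting term (Lemma 4). Here
`c = Σ_{i<n} (π_i + σ_i) x^i` is the exact error term of the error free Horner
transformation, `ĉ = chat 0` its computed value, `b̂ = b 0` the computed Horner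
value of the absolute-value error polynomials at `|x|`, `ĝ` the floating point
evaluation of `γ_{2n−1} = (2n−1)·u/(1 − (2n−1)·u)`, and `α̂` the computed
validated error bound. -/
theorem dynamic_bound_correcting_term
    (u : ℝ) (hu : 0 < u) (n : ℕ) (hn : 1 ≤ n)
    (hnu : 2 * ((n : ℝ) + 1) * u < 1)
    (x : ℝ) (π σ w chat μ φ ψ v b μ' φ' ψ' : ℕ → ℝ)
    (ghat t αhat ε₀ ε₁ ε₂ : ℝ)
    -- (1) computed correcting term
    (hμu : ∀ i < n, |μ i| ≤ u)
    (hw : ∀ i < n, w i = (π i + σ i) * (1 + μ i))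
    (hcn : chat (n - 1) = w (n - 1))
    (hφu : ∀ i < n - 1, |φ i| ≤ u) (hψu : ∀ i < n - 1, |ψ i| ≤ u)
    (hcrec : ∀ i < n - 1,
      chat i = (chat (i + 1) * x * (1 + φ i) + w i) * (1 + ψ i))
    -- (2) computed Horner value of the absolute-value error polynomials
    (hμ'u : ∀ i < n, |μ' i| ≤ u)
    (hv : ∀ i < n, v i = (|π i| + |σ i|) / (1 + μ' i))
    (hbn : b (n - 1) = v (n - 1))
    (hφ'u : ∀ i < n - 1, |φ' i| ≤ u) (hψ'u : ∀ i < n - 1, |ψ' i| ≤ u)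
    (hbrec : ∀ i < n - 1,
      b i = (b (i + 1) * |x| / (1 + φ' i) + v i) / (1 + ψ' i))
    -- (3) computed validated error bound
    (hε₀ : |ε₀| ≤ u) (hε₁ : |ε₁| ≤ u) (hε₂ : |ε₂| ≤ u)
    (hg : ghat = ((2 * (n : ℝ) - 1) * u / (1 - (2 * (n : ℝ) - 1) * u)) / (1 + ε₀))
    (ht : t = ghat * b 0 / (1 + ε₁))
    (hα : αhat = (t / (1 - 2 * ((n : ℝ) + 1) * u)) / (1 + ε₂)) :
    |(∑ i ∈ Finset.range n, (π i + σ i) * x ^ i) - chat 0| ≤ αhat := by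
  have hn1 : (1:ℝ) ≤ (n:ℝ) := by exact_mod_cast hn
  have hu4 : 4 * u < 1 := by nlinarith
  have hu1 : u < 1 := by linarith
  have h1u : (0:ℝ) < 1 + u := by linarith
  have hSnn : ∀ k, 0 ≤ ∑ i ∈ Finset.range (n - k), (|π (k+i)| + |σ (k+i)|) * |x| ^ i := by
    intro k; apply Finset.sum_nonneg; intro i _; positivity
  have habsle : ∀ k, |∑ i ∈ Finset.range (n-k), (π (k+i) + σ (k+i)) * x ^ i|
      ≤ ∑ i ∈ Finset.range (n-k), (|π (k+i)| + |σ (k+i)|) * |x| ^ i := by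
    intro k
    refine (Finset.abs_sum_le_sum_abs _ _).trans (Finset.sum_le_sum fun i _ => ?_)
    rw [abs_mul, abs_pow]
    exact mul_le_mul_of_nonneg_right (abs_add_le _ _) (by positivity)
  -- Main downward induction
  have aux : ∀ m : ℕ, ∀ k : ℕ, k + m + 1 = n →
      |(∑ i ∈ Finset.range (n-k), (π (k+i) + σ (k+i)) * x ^ i) - chat k|
        ≤ ((1+u)^(2*m+1) - 1) * (∑ i ∈ Finset.range (n-k), (|π (k+i)| + |σ (k+i)|) * |x| ^ i)
      ∧ (∑ i ∈ Finset.range (n-k), (|π (k+i)| + |σ (k+i)|) * |x| ^ i) ≤ (1+u)^(2*m+1) * b k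
      ∧ 0 ≤ b k := by
    intro m
    induction m with
    | zero =>
      intro k hk
      have hkn : k < n := by omega
      have hnk : n - k = 1 := by omega
      have hkn1 : n - 1 = k := by omega
      rw [hnk]
      simp only [Finset.sum_range_one, Nat.add_zero, Nat.mul_zero, Nat.zero_add,
        pow_zero, mul_one, pow_one]
      have hc : chat k = (π k + σ k) * (1 + μ k) := by
        have h := hcn; rw [hkn1] at h; rw [h, hw k hkn]
      have hbk : b k = (|π k| + |σ k|) / (1 + μ' k) := by
        have h := hbn; rw [hkn1] at h; rw [h, hv k hkn]
      have hμk := hμu k hkn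
      have hμ'k := hμ'u k hkn
      obtain ⟨hμ'l, hμ'r⟩ := abs_le.mp hμ'k
      have hpos : 0 < 1 + μ' k := by linarith
      have hq0 : 0 ≤ |π k| + |σ k| := by positivity
      refine ⟨?_, ?_, ?_⟩
      · rw [hc]
        have h1 : |(π k + σ k) - (π k + σ k) * (1 + μ k)| = |π k + σ k| * |μ k| := by
          rw [show (π k + σ k) - (π k + σ k) * (1 + μ k) = -((π k + σ k) * μ k) by ring,
            abs_neg, abs_mul]
        rw [h1]
        have h2 : |π k + σ k| * |μ k| ≤ (|π k| + |σ k|) * u :=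
          mul_le_mul (abs_add_le _ _) hμk (abs_nonneg _) hq0
        nlinarith
      · rw [hbk]
        have h2 : (|π k| + |σ k|)/(1+u) ≤ (|π k| + |σ k|)/(1+μ' k) := by
          apply div_le_div_of_nonneg_left hq0 hpos; linarith
        calc |π k| + |σ k| = (1+u) * ((|π k| + |σ k|)/(1+u)) := by field_simp
          _ ≤ (1+u) * ((|π k| + |σ k|)/(1+μ' k)) := by
              exact mul_le_mul_of_nonneg_left h2 h1u.le
      · rw [hbk]; exact div_nonneg hq0 hpos.le
    | succ m ih =>
      intro k hk
      have hkn : k < n := by omega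
      have hk1 : k < n - 1 := by omega
      obtain ⟨ih1, ih2, ih3⟩ := ih (k+1) (by omega)
      have hCeS := habsle (k+1)
      have hS1nn := hSnn (k+1)
      have hnk : n - k = (n - (k+1)) + 1 := by omega
      set t' := n - (k+1) with ht'
      set S1 := ∑ i ∈ Finset.range t', (|π (k+1+i)| + |σ (k+1+i)|) * |x| ^ i with hS1def
      set Ce := ∑ i ∈ Finset.range t', (π (k+1+i) + σ (k+1+i)) * x ^ i with hCedef
      have hsum1 : ∑ i ∈ Finset.range (n-k), (π (k+i) + σ (k+i)) * x ^ i
          = Ce * x + (π k + σ k) := by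
        rw [hnk]; exact horner_sum_succ (fun j => π j + σ j) x t' k
      have hsum2 : ∑ i ∈ Finset.range (n-k), (|π (k+i)| + |σ (k+i)|) * |x| ^ i
          = S1 * |x| + (|π k| + |σ k|) := by
        rw [hnk]; exact horner_sum_succ (fun j => |π j| + |σ j|) |x| t' k
      rw [hsum1, hsum2]
      set E := (1+u)^(2*m+1) with hEdef
      have hE1 : (1:ℝ) ≤ E := one_le_pow_one_add u hu.le _
      have hEE : (1+u)^(2*(m+1)+1) = E * (1+u)^2 := by
        rw [hEdef, show 2*(m+1)+1 = (2*m+1)+2 by ring, pow_add]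
      have hφk := hφu k hk1
      have hψk := hψu k hk1
      have hμk := hμu k hkn
      have hφ'k := hφ'u k hk1
      have hψ'k := hψ'u k hk1
      have hμ'k := hμ'u k hkn
      obtain ⟨hφl, hφr⟩ := abs_le.mp hφk
      obtain ⟨hψl, hψr⟩ := abs_le.mp hψk
      obtain ⟨hμl, hμr⟩ := abs_le.mp hμk
      obtain ⟨hφ'l, hφ'r⟩ := abs_le.mp hφ'k
      obtain ⟨hψ'l, hψ'r⟩ := abs_le.mp hψ'k
      obtain ⟨hμ'l, hμ'r⟩ := abs_le.mp hμ'k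
      have hφ'pos : 0 < 1 + φ' k := by linarith
      have hψ'pos : 0 < 1 + ψ' k := by linarith
      have hμ'pos : 0 < 1 + μ' k := by linarith
      have hq0 : 0 ≤ |π k| + |σ k| := by positivity
      have hck : chat k = (chat (k+1) * x * (1+φ k) + (π k + σ k)*(1+μ k)) * (1+ψ k) := by
        rw [hcrec k hk1, hw k hkn]
      have hbk : b k = (b (k+1) * |x| / (1+φ' k) + (|π k|+|σ k|)/(1+μ' k)) / (1+ψ' k) := by
        rw [hbrec k hk1, hv k hkn]
      have hd : |chat (k+1) - Ce| ≤ (E-1) * S1 := by rw [abs_sub_comm]; exact ih1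
      -- Part 1
      have part1 : |Ce * x + (π k + σ k) - chat k|
          ≤ ((1+u)^(2*(m+1)+1) - 1) * (S1 * |x| + (|π k| + |σ k|)) := by
        have hdecomp : chat k - (Ce * x + (π k + σ k)) =
            Ce * x * ((1+φ k)*(1+ψ k) - 1)
            + (chat (k+1) - Ce) * x * ((1+φ k)*(1+ψ k))
            + (π k + σ k) * ((1+μ k)*(1+ψ k) - 1) := by rw [hck]; ring
        have hPnn : (0:ℝ) ≤ (1+φ k)*(1+ψ k) := l_prod_nonneg _ _ u hφl hψl hu1.le
        have hPle : (1+φ k)*(1+ψ k) ≤ (1+u)^2 := l_prod_le _ _ u hφl hφr hψl hψr hu.le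
        have hP1 : |(1+φ k)*(1+ψ k) - 1| ≤ 2*u + u^2 := l_prod_err _ _ u hφl hφr hψl hψr hu.le
        have hQ1 : |(1+μ k)*(1+ψ k) - 1| ≤ 2*u + u^2 := l_prod_err _ _ u hμl hμr hψl hψr hu.le
        have habs : |chat k - (Ce*x + (π k+σ k))|
            ≤ |Ce| *|x| *|(1+φ k)*(1+ψ k)-1|
              + |chat (k+1)-Ce| *|x| *((1+φ k)*(1+ψ k))
              + (|π k|+|σ k|)*|(1+μ k)*(1+ψ k)-1| := by
          rw [hdecomp]
          have e1 : |Ce * x * ((1+φ k)*(1+ψ k) - 1)| = |Ce| *|x| *|(1+φ k)*(1+ψ k)-1| := by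
            rw [abs_mul, abs_mul]
          have e2 : |(chat (k+1) - Ce) * x * ((1+φ k)*(1+ψ k))|
              = |chat (k+1)-Ce| *|x| *((1+φ k)*(1+ψ k)) := by
            rw [abs_mul, abs_mul, abs_of_nonneg hPnn]
          have e3 : |(π k + σ k) * ((1+μ k)*(1+ψ k) - 1)|
              ≤ (|π k|+|σ k|)*|(1+μ k)*(1+ψ k)-1| := by
            rw [abs_mul]
            exact mul_le_mul_of_nonneg_right (abs_add_le _ _) (abs_nonneg _)
          calc |Ce * x * ((1+φ k)*(1+ψ k) - 1)
                + (chat (k+1) - Ce) * x * ((1+φ k)*(1+ψ k))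
                + (π k + σ k) * ((1+μ k)*(1+ψ k) - 1)|
              ≤ |Ce * x * ((1+φ k)*(1+ψ k) - 1)
                + (chat (k+1) - Ce) * x * ((1+φ k)*(1+ψ k))|
                + |(π k + σ k) * ((1+μ k)*(1+ψ k) - 1)| := abs_add_le _ _
            _ ≤ |Ce * x * ((1+φ k)*(1+ψ k) - 1)|
                + |(chat (k+1) - Ce) * x * ((1+φ k)*(1+ψ k))|
                + |(π k + σ k) * ((1+μ k)*(1+ψ k) - 1)| := by
                  linarith [abs_add_le (Ce * x * ((1+φ k)*(1+ψ k) - 1))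
                    ((chat (k+1) - Ce) * x * ((1+φ k)*(1+ψ k)))]
            _ ≤ _ := by rw [e1, e2]; linarith
        have t1 : |Ce| *|x| *|(1+φ k)*(1+ψ k)-1| ≤ S1*|x| *(2*u+u^2) := by
          apply mul_le_mul
          · exact mul_le_mul_of_nonneg_right hCeS (abs_nonneg x)
          · exact hP1
          · exact abs_nonneg _
          · positivity
        have t2 : |chat (k+1)-Ce| *|x| *((1+φ k)*(1+ψ k)) ≤ ((E-1)*S1)*|x| *(1+u)^2 := by
          apply mul_le_mul
          · exact mul_le_mul_of_nonneg_right hd (abs_nonneg x)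
          · exact hPle
          · exact hPnn
          · have : (0:ℝ) ≤ E - 1 := by linarith
            positivity
        have t3 : (|π k|+|σ k|)*|(1+μ k)*(1+ψ k)-1| ≤ (|π k|+|σ k|)*(2*u+u^2) :=
          mul_le_mul_of_nonneg_left hQ1 hq0
        rw [abs_sub_comm, hEE]
        have hx0 : (0:ℝ) ≤ |x| := abs_nonneg x
        refine l_combine1 _ (S1 * |x|) (|π k| + |σ k|) u E hq0 hE1
          (mul_nonneg hS1nn hx0) ?_
        have h' : (E-1)*S1* |x| *(1+u)^2 = (E-1)*(S1* |x|)*(1+u)^2 := by ring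
        linarith [habs, t1, t2, t3]
      -- Part 2
      have hbknn : 0 ≤ b k := by
        rw [hbk]
        apply div_nonneg _ hψ'pos.le
        exact add_nonneg (div_nonneg (mul_nonneg ih3 (abs_nonneg x)) hφ'pos.le)
          (div_nonneg hq0 hμ'pos.le)
      have h5 : (b (k+1) * |x| + (|π k|+|σ k|)) / (1+u)^2 ≤ b k := by
        rw [hbk]
        have step1 : b (k+1)*|x|/(1+u) ≤ b (k+1)*|x|/(1+φ' k) :=
          div_le_div_of_nonneg_left (mul_nonneg ih3 (abs_nonneg x)) hφ'pos (by linarith)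
        have step2 : (|π k|+|σ k|)/(1+u) ≤ (|π k|+|σ k|)/(1+μ' k) :=
          div_le_div_of_nonneg_left hq0 hμ'pos (by linarith)
        have hRnn : 0 ≤ b (k+1)*|x|/(1+φ' k) + (|π k|+|σ k|)/(1+μ' k) :=
          add_nonneg (div_nonneg (mul_nonneg ih3 (abs_nonneg x)) hφ'pos.le)
            (div_nonneg hq0 hμ'pos.le)
        have step3 : (b (k+1)*|x|/(1+u) + (|π k|+|σ k|)/(1+u))/(1+u)
            ≤ (b (k+1)*|x|/(1+φ' k) + (|π k|+|σ k|)/(1+μ' k))/(1+ψ' k) :=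
          div_le_div₀ hRnn (add_le_add step1 step2) hψ'pos (by linarith)
        calc (b (k+1) * |x| + (|π k|+|σ k|)) / (1+u)^2
            = (b (k+1)*|x|/(1+u) + (|π k|+|σ k|)/(1+u))/(1+u) := by
              rw [← add_div, div_div, ← pow_two]
          _ ≤ _ := step3
      have h5' : b (k+1)*|x| + (|π k|+|σ k|) ≤ (1+u)^2 * b k := by
        rw [div_le_iff₀ (by positivity : (0:ℝ) < (1+u)^2)] at h5
        linarith
      have part2 : S1 * |x| + (|π k| + |σ k|) ≤ (1+u)^(2*(m+1)+1) * b k := by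
        rw [hEE, mul_assoc]
        exact l_combine2 S1 (|π k| + |σ k|) u E (b (k+1)) (|x|) (b k) hq0 hE1
          (abs_nonneg x) h5' ih2
      exact ⟨part1, part2, hbknn⟩
  -- Final assembly
  obtain ⟨h1, h2, h3⟩ := aux (n-1) 0 (by omega)
  simp only [Nat.sub_zero, Nat.zero_add] at h1 h2
  set P := (1+u)^(2*(n-1)+1) with hPdef
  have hP1 : (1:ℝ) ≤ P := one_le_pow_one_add u hu.le _
  have hS0nn : 0 ≤ ∑ i ∈ Finset.range n, (|π i| + |σ i|) * |x| ^ i := by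
    have := hSnn 0
    simpa using this
  -- |c - chat 0| ≤ (P-1) * P * b 0
  have hbound : |(∑ i ∈ Finset.range n, (π i + σ i) * x ^ i) - chat 0|
      ≤ (P - 1) * (P * b 0) := by
    calc |(∑ i ∈ Finset.range n, (π i + σ i) * x ^ i) - chat 0|
        ≤ (P - 1) * (∑ i ∈ Finset.range n, (|π i| + |σ i|) * |x| ^ i) := h1
      _ ≤ (P - 1) * (P * b 0) := mul_le_mul_of_nonneg_left h2 (by linarith)
  -- Numeric facts
  set G : ℝ := 2*(n:ℝ) - 1 with hGdef
  set D : ℝ := 2*((n:ℝ)+1)*u with hDdef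
  have hGu : G * u < 1 := by rw [hGdef]; nlinarith
  have hG0 : (0:ℝ) ≤ G := by rw [hGdef]; nlinarith
  have hGpos : (0:ℝ) < 1 - G*u := by linarith
  have hDpos : (0:ℝ) < 1 - D := by rw [hDdef]; linarith
  have hcast1 : ((2*(n-1)+1 : ℕ) : ℝ) = G := by
    rw [hGdef]; push_cast [Nat.cast_sub hn]; ring
  have hcast2 : ((2*(n-1)+1+3 : ℕ) : ℝ) = 2*((n:ℝ)+1) := by
    push_cast [Nat.cast_sub hn]; ring
  have hL1 : P * (1 - G*u) ≤ 1 := by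
    have := pow_mul_one_sub_le u hu.le (2*(n-1)+1) (by rw [hcast1]; exact hGu)
    rwa [hcast1] at this
  have hL2 : P * (1+u)^3 * (1 - D) ≤ 1 := by
    have hc : ((2*(n-1)+1+3 : ℕ) : ℝ) * u = D := by rw [hcast2, hDdef]
    have := pow_mul_one_sub_le u hu.le (2*(n-1)+1+3) (by rw [hc]; rw [hDdef]; linarith)
    rw [hc, pow_add] at this
    rwa [← hPdef] at this
  have hγle : P - 1 ≤ G*u/(1 - G*u) := by
    rw [le_div_iff₀ hGpos]; nlinarith
  have hγ0 : (0:ℝ) ≤ G*u/(1 - G*u) := div_nonneg (mul_nonneg hG0 hu.le) hGpos.le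
  -- positivity of the (1+ε) factors
  obtain ⟨he0l, he0r⟩ := abs_le.mp hε₀
  obtain ⟨he1l, he1r⟩ := abs_le.mp hε₁
  obtain ⟨he2l, he2r⟩ := abs_le.mp hε₂
  have hp0 : (0:ℝ) < 1 + ε₀ := by linarith
  have hp1 : (0:ℝ) < 1 + ε₁ := by linarith
  have hp2 : (0:ℝ) < 1 + ε₂ := by linarith
  set M : ℝ := (1+ε₀)*(1+ε₁)*(1+ε₂)*(1-D) with hMdef
  have hM0 : (0:ℝ) < M := by rw [hMdef]; positivity
  have hαeq : αhat = G*u/(1 - G*u) * b 0 / M := by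
    rw [hα, ht, hg, hMdef]
    field_simp [hp0.ne', hp1.ne', hp2.ne', hDpos.ne', hGpos.ne']
  have hMle : M ≤ (1+u)^3 * (1-D) := by
    rw [hMdef]
    have m1 : (1+ε₀)*(1+ε₁) ≤ (1+u)*(1+u) :=
      mul_le_mul (by linarith) (by linarith) hp1.le (by linarith)
    have m2 : (1+ε₀)*(1+ε₁)*(1+ε₂) ≤ (1+u)*(1+u)*(1+u) :=
      mul_le_mul m1 (by linarith) hp2.le (by positivity)
    have m3 : (1+ε₀)*(1+ε₁)*(1+ε₂)*(1-D) ≤ (1+u)*(1+u)*(1+u)*(1-D) :=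
      mul_le_mul_of_nonneg_right m2 hDpos.le
    calc (1+ε₀)*(1+ε₁)*(1+ε₂)*(1-D) ≤ (1+u)*(1+u)*(1+u)*(1-D) := m3
      _ = (1+u)^3 * (1-D) := by ring
  -- conclude
  rw [hαeq, le_div_iff₀ hM0]
  have hPb0 : (0:ℝ) ≤ P * b 0 := mul_nonneg (by linarith) h3
  calc |(∑ i ∈ Finset.range n, (π i + σ i) * x ^ i) - chat 0| * M
      ≤ (P - 1) * (P * b 0) * M := by
        exact mul_le_mul_of_nonneg_right hbound hM0.le
    _ ≤ (G*u/(1 - G*u)) * (P * b 0) * M := by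
        exact mul_le_mul_of_nonneg_right (mul_le_mul_of_nonneg_right hγle hPb0) hM0.le
    _ ≤ (G*u/(1 - G*u)) * (P * b 0) * ((1+u)^3 * (1-D)) := by
        exact mul_le_mul_of_nonneg_left hMle (mul_nonneg hγ0 hPb0)
    _ = (G*u/(1 - G*u)) * b 0 * (P * (1+u)^3 * (1-D)) := by ring
    _ ≤ (G*u/(1 - G*u)) * b 0 * 1 := by
        exact mul_le_mul_of_nonneg_left hL2 (mul_nonneg hγ0 h3)
    _ = G*u/(1 - G*u) * b 0 := by ring
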